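/- Every chordal graph (a simple graph in which every cycle of length at least four has a chord) contains a simplicial vertex, i.e., a vertex whose closed neighborhood induces a complete graph. Moreover, if the chordal graph is not complete, it contains two non-adjacent simplicial vertices. -/

import Mathlib

/-- A cycle has a chord: two vertices on the cycle adjacent in `G`,
whose edge is not an edge of the cycle. -/
def HasChord {V : Type*} (G : SimpleGraph V) {v : V} (c : G.Walk v v) : Prop :=
  ∃ x y, G.Adj x y ∧ x ∈ c.support ∧ y ∈ c.support ∧ s(x, y) ∉ c.edges

/-- A graph is chordal if every cycle of length at least 4 has a chord. -/
def Chordal {V : Type*} (G : SimpleGraph V) : Prop :=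
  ∀ (v : V) (c : G.Walk v v), c.IsCycle → 4 ≤ c.length → HasChord G c

/-- A vertex is simplicial if its closed neighbourhood induces a complete graph. -/
def Simplicial {V : Type*} (G : SimpleGraph V) (v : V) : Prop :=
  ∀ x ∈ insert v (G.neighborSet v), ∀ y ∈ insert v (G.neighborSet v), x ≠ y → G.Adj x y

open SimpleGraph

section Aux
variable {V : Type*} {G : SimpleGraph V}


lemma edge_of_length_one {u v : V} (w : G.Walk u v) (h : w.length = 1) :
    s(u, v) ∈ w.edges := by
  cases w with
  | nil => simp at h
  | cons hadj p =>
    simp only [Walk.length_cons, Nat.add_eq_right] at h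
    have := p.eq_of_length_eq_zero h
    subst this
    simp

lemma adj_of_length_one {u v : V} (w : G.Walk u v) (h : w.length = 1) : G.Adj u v := by
  cases w with
  | nil => simp at h
  | cons hadj p =>
    simp only [Walk.length_cons, Nat.add_eq_right] at h
    have := p.eq_of_length_eq_zero h
    subst this
    exact hadj

/-- Shortcut lemma: a chord of a walk yields a strictly shorter walk within its support. -/
lemma shortcut [DecidableEq V] {s t : V} (P : G.Walk s t) {x y : V}
    (hadj : G.Adj x y) (hx : x ∈ P.support) (hy : y ∈ P.support)
    (he : s(x, y) ∉ P.edges) :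
    ∃ W : G.Walk s t, W.length < P.length ∧ ∀ v ∈ W.support, v ∈ P.support := by
  have hPlen : (P.takeUntil x hx).length + (P.dropUntil x hx).length = P.length := by
    rw [← Walk.length_append, Walk.take_spec]
  by_cases hyD : y ∈ (P.dropUntil x hx).support
  · set D := P.dropUntil x hx with hD
    have hDlen : (D.takeUntil y hyD).length + (D.dropUntil y hyD).length = D.length := by
      rw [← Walk.length_append, Walk.take_spec]
    have h2 : 2 ≤ (D.takeUntil y hyD).length := by
      rcases Nat.lt_or_ge (D.takeUntil y hyD).length 2 with hlt | hge
      · interval_cases h : (D.takeUntil y hyD).length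
        · exact absurd ((D.takeUntil y hyD).eq_of_length_eq_zero h) hadj.ne
        · exact absurd (P.edges_dropUntil_subset hx
            (Walk.edges_takeUntil_subset D hyD (edge_of_length_one _ h))) he
      · exact hge
    refine ⟨(P.takeUntil x hx).append (Walk.cons hadj (D.dropUntil y hyD)), ?_, ?_⟩
    · rw [Walk.length_append, Walk.length_cons]
      omega
    · intro v hv
      rw [Walk.support_append] at hv
      rcases List.mem_append.mp hv with h1 | h1
      · exact P.support_takeUntil_subset hx h1
      · have : v ∈ (Walk.cons hadj (D.dropUntil y hyD)).support := List.mem_of_mem_tail h1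
        rcases List.mem_cons.mp (by rwa [Walk.support_cons] at this) with h3 | h3
        · exact h3 ▸ hx
        · exact P.support_dropUntil_subset hx (D.support_dropUntil_subset hyD h3)
  · -- y occurs in the take part
    set T := P.takeUntil x hx with hT
    have hyT : y ∈ T.support := by
      have := P.take_spec hx
      have hy' := hy
      rw [← this, Walk.support_append, List.mem_append] at hy'
      rcases hy' with h1 | h1
      · exact h1
      · exact absurd (List.mem_of_mem_tail h1) hyD
    have hTlen : (T.takeUntil y hyT).length + (T.dropUntil y hyT).length = T.length := by
      rw [← Walk.length_append, Walk.take_spec]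
    have h2 : 2 ≤ (T.dropUntil y hyT).length := by
      rcases Nat.lt_or_ge (T.dropUntil y hyT).length 2 with hlt | hge
      · interval_cases h : (T.dropUntil y hyT).length
        · exact absurd ((T.dropUntil y hyT).eq_of_length_eq_zero h).symm hadj.ne
        · refine absurd (P.edges_takeUntil_subset hx
            (Walk.edges_dropUntil_subset T hyT (edge_of_length_one _ h))) ?_
          rwa [Sym2.eq_swap]
      · exact hge
    refine ⟨(T.takeUntil y hyT).append (Walk.cons hadj.symm (P.dropUntil x hx)), ?_, ?_⟩
    · rw [Walk.length_append, Walk.length_cons]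
      omega
    · intro v hv
      rw [Walk.support_append] at hv
      rcases List.mem_append.mp hv with h1 | h1
      · exact P.support_takeUntil_subset hx (T.support_takeUntil_subset hyT h1)
      · have : v ∈ (Walk.cons hadj.symm (P.dropUntil x hx)).support := List.mem_of_mem_tail h1
        rcases List.mem_cons.mp (by rwa [Walk.support_cons] at this) with h3 | h3
        · exact h3 ▸ P.support_takeUntil_subset hx hyT
        · exact P.support_dropUntil_subset hx h3

/-- Minimal-length path whose support satisfies a predicate. -/
lemma exists_min_path (pred : V → Prop) {s t : V}
    (hne : ∃ w : G.Walk s t, ∀ v ∈ w.support, pred v) :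
    ∃ P : G.Walk s t, P.IsPath ∧ (∀ v ∈ P.support, pred v) ∧
      ∀ w : G.Walk s t, (∀ v ∈ w.support, pred v) → P.length ≤ w.length := by
  classical
  have hQ : ∃ n, ∃ w : G.Walk s t, (∀ v ∈ w.support, pred v) ∧ w.length = n := by
    obtain ⟨w, hw⟩ := hne
    exact ⟨w.length, w, hw, rfl⟩
  obtain ⟨w, hw, hwl⟩ := Nat.find_spec hQ
  refine ⟨w.bypass, w.bypass_isPath, fun v hv => hw v (w.support_bypass_subset hv), ?_⟩
  intro w' hw'
  have h1 : w.bypass.length ≤ Nat.find hQ := hwl ▸ w.length_bypass_le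
  have h2 : Nat.find hQ ≤ w'.length := Nat.find_min' hQ ⟨w', hw', rfl⟩
  omega

lemma Chordal.induce (hG : Chordal G) (s : Set V) : Chordal (G.induce s) := by
  intro v c hc hlen
  set f := (SimpleGraph.Embedding.induce (G := G) s).toHom with hf
  have hfinj : Function.Injective f := fun a b h => Subtype.ext h
  obtain ⟨x, y, hxy, hxs, hys, hxe⟩ :=
    hG (v : V) (c.map f) (hc.map hfinj) (le_of_le_of_eq hlen (Walk.length_map f c).symm)
  replace hxs : x ∈ c.support.map f := by rw [← Walk.support_map]; exact hxs
  replace hys : y ∈ c.support.map f := by rw [← Walk.support_map]; exact hys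
  obtain ⟨x', hx', rfl⟩ := List.mem_map.mp hxs
  obtain ⟨y', hy', rfl⟩ := List.mem_map.mp hys
  refine ⟨x', y', hxy, hx', hy', fun hmem => hxe ?_⟩
  exact (by rw [Walk.edges_map]; exact List.mem_map.mpr ⟨s(x', y'), hmem, by simp [Sym2.map_pair_eq]⟩ : s(f x', f y') ∈ (c.map f).edges)

/-- The set of vertices reachable from `a` by walks avoiding `S`. -/
def AvoidComp (G : SimpleGraph V) (S : Set V) (a : V) : Set V :=
  {v | ∃ w : G.Walk a v, ∀ x ∈ w.support, x ∉ S}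

lemma avoid_self {S : Set V} {a : V} (ha : a ∉ S) : a ∈ AvoidComp G S a :=
  ⟨Walk.nil, by simp [ha]⟩

lemma avoid_not_mem {S : Set V} {a v : V} (hv : v ∈ AvoidComp G S a) : v ∉ S := by
  obtain ⟨w, hw⟩ := hv
  exact hw v w.end_mem_support

lemma avoid_closure {S : Set V} {a v x : V} (hv : v ∈ AvoidComp G S a)
    (hadj : G.Adj v x) (hx : x ∉ S) : x ∈ AvoidComp G S a := by
  obtain ⟨w, hw⟩ := hv
  refine ⟨w.concat hadj, fun z hz => ?_⟩
  rw [Walk.support_concat, List.mem_append] at hz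
  rcases hz with h | h
  · exact hw z h
  · have : z = x := by simpa using h
    exact this ▸ hx


lemma avoid_support {S : Set V} {a u v : V} (w : G.Walk u v)
    (hu : u ∈ AvoidComp G S a) (hw : ∀ x ∈ w.support, x ∉ S) :
    ∀ x ∈ w.support, x ∈ AvoidComp G S a := by
  induction w with
  | nil => intro x hx; rw [Walk.support_nil, List.mem_singleton] at hx; exact hx ▸ hu
  | @cons u c v hadj p ih =>
    intro x hx
    have hc : c ∈ AvoidComp G S a := by
      obtain ⟨w0, hw0⟩ := hu
      refine ⟨w0.concat hadj, fun z hz => ?_⟩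
      rw [Walk.support_concat, List.mem_append] at hz
      rcases hz with h | h
      · exact hw0 z h
      · have : z = c := by simpa using h
        exact this ▸ hw c (by simp [Walk.support_cons])
    rw [Walk.support_cons, List.mem_cons] at hx
    rcases hx with h | h
    · exact h ▸ hu
    · exact ih hc (fun z hz => hw z (by rw [Walk.support_cons]; exact List.mem_cons_of_mem _ hz)) x h

lemma avoid_connect {S : Set V} {a u v : V} (hu : u ∈ AvoidComp G S a)
    (hv : v ∈ AvoidComp G S a) :
    ∃ w : G.Walk u v, ∀ x ∈ w.support, x ∈ AvoidComp G S a := by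
  obtain ⟨wu, hwu⟩ := hu
  obtain ⟨wv, hwv⟩ := hv
  refine ⟨wu.reverse.append wv, avoid_support _ ⟨wu, hwu⟩ ?_⟩
  intro x hx
  rw [Walk.support_append, List.mem_append] at hx
  rcases hx with h | h
  · exact hwu x (by rwa [Walk.support_reverse, List.mem_reverse] at h)
  · exact hwv x (List.mem_of_mem_tail h)

lemma exists_concat_eq {u v : V} (w : G.Walk u v) (h : u ≠ v) :
    ∃ (p : V) (hadj : G.Adj p v) (w' : G.Walk u p), w = w'.concat hadj := by
  cases w with
  | nil => exact absurd rfl h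
  | cons hadj p =>
    obtain ⟨x, q, h', hc⟩ := Walk.exists_cons_eq_concat hadj p
    exact ⟨x, h', q, hc⟩

lemma exists_nbr [DecidableEq V] {S : Set V} {a b s : V} (ha : a ∉ S)
    (hsep : ∀ w : G.Walk a b, ∃ x ∈ w.support, x ∈ S)
    (hs : s ∈ S)
    (w : G.Walk a b) (hw : ∀ x ∈ w.support, x ∈ S → x = s) :
    ∃ p ∈ AvoidComp G S a, G.Adj p s := by
  have hsw : s ∈ w.support := by
    by_contra hns
    obtain ⟨x, hx, hxS⟩ := hsep w
    exact hns ((hw x hx hxS) ▸ hx)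
  set T := w.takeUntil s hsw with hT
  have hcount := w.count_support_takeUntil_eq_one hsw
  have has : a ≠ s := fun h => ha (h ▸ hs)
  obtain ⟨p, hadj, w', hw'⟩ := exists_concat_eq T has
  have hsupp : T.support = w'.support ++ [s] := by
    rw [hw', Walk.support_concat]
  have hsnot : s ∉ w'.support := by
    intro hmem
    rw [hsupp, List.count_append] at hcount
    have h1 : 1 ≤ List.count s w'.support := List.count_pos_iff.mpr hmem
    simp [List.count_singleton] at hcount
    omega
  refine ⟨p, ⟨w', fun x hx hxS => ?_⟩, hadj⟩
  have hxT : x ∈ T.support := by rw [hsupp]; exact List.mem_append_left _ hx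
  exact hsnot ((hw x (w.support_takeUntil_subset hsw hxT) hxS) ▸ hx)
section Clique
variable [DecidableEq V]

lemma sep_clique (hG : Chordal G) {S : Set V} {a b : V}
    (hsep : ∀ w : G.Walk a b, ∃ x ∈ w.support, x ∈ S)
    (hmin : ∀ s ∈ S, ∃ w : G.Walk a b, ∀ x ∈ w.support, x ∈ S → x = s)
    (ha : a ∉ S) (hb : b ∉ S) :
    ∀ s ∈ S, ∀ t ∈ S, s ≠ t → G.Adj s t := by
  set A := AvoidComp G S a with hA
  set B := AvoidComp G S b with hB
  have hsep' : ∀ w : G.Walk b a, ∃ x ∈ w.support, x ∈ S := by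
    intro w
    obtain ⟨x, hx, hxS⟩ := hsep w.reverse
    rw [Walk.support_reverse, List.mem_reverse] at hx
    exact ⟨x, hx, hxS⟩
  have hAB : ∀ v, v ∈ A → v ∈ B → False := by
    rintro v ⟨w1, h1⟩ ⟨w2, h2⟩
    obtain ⟨x, hx, hxS⟩ := hsep (w1.append w2.reverse)
    rw [Walk.support_append, List.mem_append] at hx
    rcases hx with h | h
    · exact h1 x h hxS
    · refine h2 x ?_ hxS
      have := List.mem_of_mem_tail h
      rwa [Walk.support_reverse, List.mem_reverse] at this
  have hnA : ∀ s ∈ S, ∃ p ∈ A, G.Adj p s := by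
    intro s hs
    obtain ⟨w, hw⟩ := hmin s hs
    exact exists_nbr ha hsep hs w hw
  have hnB : ∀ s ∈ S, ∃ p ∈ B, G.Adj p s := by
    intro s hs
    obtain ⟨w, hw⟩ := hmin s hs
    refine exists_nbr hb hsep' hs w.reverse ?_
    intro x hx
    rw [Walk.support_reverse, List.mem_reverse] at hx
    exact hw x hx
  intro s hsS t htS hst
  by_contra hadjst
  obtain ⟨a1, ha1A, ha1s⟩ := hnA s hsS
  obtain ⟨a2, ha2A, ha2t⟩ := hnA t htS
  obtain ⟨b1, hb1B, hb1s⟩ := hnB s hsS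
  obtain ⟨b2, hb2B, hb2t⟩ := hnB t htS
  obtain ⟨wa, hwa⟩ := avoid_connect (G := G) ha1A ha2A
  obtain ⟨wb, hwb⟩ := avoid_connect (G := G) hb1B hb2B
  have hP0 : ∃ w : G.Walk s t, ∀ v ∈ w.support, v = s ∨ v = t ∨ v ∈ A := by
    refine ⟨Walk.cons ha1s.symm (wa.concat ha2t), ?_⟩
    intro v hv
    rw [Walk.support_cons, List.mem_cons] at hv
    rcases hv with h | h
    · exact Or.inl h
    · rw [Walk.support_concat, List.mem_append] at h
      rcases h with h | h
      · exact Or.inr (Or.inr (hwa v h))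
      · exact Or.inr (Or.inl (by simpa using h))
  have hQ0 : ∃ w : G.Walk s t, ∀ v ∈ w.support, v = s ∨ v = t ∨ v ∈ B := by
    refine ⟨Walk.cons hb1s.symm (wb.concat hb2t), ?_⟩
    intro v hv
    rw [Walk.support_cons, List.mem_cons] at hv
    rcases hv with h | h
    · exact Or.inl h
    · rw [Walk.support_concat, List.mem_append] at h
      rcases h with h | h
      · exact Or.inr (Or.inr (hwb v h))
      · exact Or.inr (Or.inl (by simpa using h))
  obtain ⟨P, hPpath, hPA, hPmin⟩ := exists_min_path _ hP0
  obtain ⟨Q, hQpath, hQB, hQmin⟩ := exists_min_path _ hQ0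
  have hP2 : 2 ≤ P.length := by
    rcases Nat.lt_or_ge P.length 2 with hlt | hge
    · interval_cases h : P.length
      · exact (hst (P.eq_of_length_eq_zero h)).elim
      · exact (hadjst (adj_of_length_one P h)).elim
    · exact hge
  have hQ2 : 2 ≤ Q.length := by
    rcases Nat.lt_or_ge Q.length 2 with hlt | hge
    · interval_cases h : Q.length
      · exact (hst (Q.eq_of_length_eq_zero h)).elim
      · exact (hadjst (adj_of_length_one Q h)).elim
    · exact hge
  -- destructure P
  cases P with
  | nil => exact hst rfl
  | @cons _ c _ h1 P' =>
    rw [Walk.cons_isPath_iff] at hPpath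
    obtain ⟨hP'path, hsP'⟩ := hPpath
    have hcs : c ≠ s := h1.ne'
    have hct : c ≠ t := by
      rintro rfl
      have : P' = Walk.nil := Walk.isPath_iff_eq_nil.mp hP'path
      rw [this] at hP2
      simp at hP2
    have hcA : c ∈ A := by
      have := hPA c (by rw [Walk.support_cons]; exact List.mem_cons_of_mem _ P'.start_mem_support)
      tauto
    set L := Q.reverse with hL
    have hLpath : L.IsPath := hQpath.reverse
    have hLmem : ∀ z, z ∈ L.support → z ∈ Q.support := by
      intro z hz
      rwa [hL, Walk.support_reverse, List.mem_reverse] at hz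
    have htTail : t ∉ L.support.tail := by
      have hnodup := (Walk.isPath_def L).mp hLpath
      rw [L.support_eq_cons] at hnodup
      exact (List.nodup_cons.mp hnodup).1
    have hRsupport : ∀ z ∈ (P'.append L).support, z ∈ P'.support ∨ z ∈ L.support.tail := by
      intro z hz
      rw [Walk.support_append, List.mem_append] at hz
      exact hz
    have hRpath : (P'.append L).IsPath := by
      rw [Walk.isPath_def, Walk.support_append]
      refine List.Nodup.append ((Walk.isPath_def P').mp hP'path)
        (((Walk.isPath_def L).mp hLpath).tail) ?_
      intro z hzP hzL
      have hzs : z ≠ s := fun h => hsP' (h ▸ hzP)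
      have hzA := hPA z (by rw [Walk.support_cons]; exact List.mem_cons_of_mem _ hzP)
      have hzt : z ≠ t := fun h => htTail (h ▸ hzL)
      have hzB := hQB z (hLmem z (List.mem_of_mem_tail hzL))
      rcases hzA with h | h | h
      · exact hzs h
      · exact hzt h
      · rcases hzB with h' | h' | h'
        · exact hzs h'
        · exact hzt h'
        · exact hAB z h h'
    have hsc_not : s(s, c) ∉ (P'.append L).edges := by
      intro hmem
      rw [Walk.edges_append, List.mem_append] at hmem
      rcases hmem with h | h
      · exact hsP' (Walk.fst_mem_support_of_mem_edges P' h)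
      · have hcL : c ∈ L.support := Walk.snd_mem_support_of_mem_edges L h
        have hcB := hQB c (hLmem c hcL)
        rcases hcB with h' | h' | h'
        · exact hcs h'
        · exact hct h'
        · exact hAB c hcA h'
    set C := Walk.cons h1 (P'.append L) with hC
    have hCcycle : C.IsCycle := (Walk.cons_isCycle_iff _ h1).mpr ⟨hRpath, hsc_not⟩
    have hClen : 4 ≤ C.length := by
      have : C.length = P'.length + Q.length + 1 := by
        rw [hC, Walk.length_cons, Walk.length_append, hL, Walk.length_reverse]
      rw [Walk.length_cons] at hP2
      omega
    obtain ⟨x, y, hxy, hxC, hyC, hxyE⟩ := hG s C hCcycle hClen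
    have hCedges : C.edges = s(s, c) :: (P'.edges ++ L.edges) := by
      rw [hC, Walk.edges_cons, Walk.edges_append]
    have hPe : s(x, y) ∉ (Walk.cons h1 P').edges := by
      intro h
      rw [Walk.edges_cons, List.mem_cons] at h
      rcases h with h | h
      · exact hxyE (by rw [hCedges, h]; exact List.mem_cons_self)
      · exact hxyE (by rw [hCedges]; exact List.mem_cons_of_mem _ (List.mem_append_left _ h))
    have hQe : s(x, y) ∉ Q.edges := by
      intro h
      have : s(x, y) ∈ L.edges := by rw [hL, Walk.edges_reverse, List.mem_reverse]; exact h
      exact hxyE (by rw [hCedges]; exact List.mem_cons_of_mem _ (List.mem_append_right _ this))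
    have memPQ : ∀ z ∈ C.support, z ∈ (Walk.cons h1 P').support ∨ z ∈ Q.support := by
      intro z hz
      rw [hC, Walk.support_cons, List.mem_cons] at hz
      rcases hz with h | h
      · exact Or.inl (h ▸ (Walk.cons h1 P').start_mem_support)
      · rcases hRsupport z h with h' | h'
        · exact Or.inl (by rw [Walk.support_cons]; exact List.mem_cons_of_mem _ h')
        · exact Or.inr (hLmem z (List.mem_of_mem_tail h'))
    have hshortP : x ∈ (Walk.cons h1 P').support → y ∈ (Walk.cons h1 P').support → False := by
      intro hx hy
      obtain ⟨W, hWl, hWs⟩ := shortcut (Walk.cons h1 P') hxy hx hy hPe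
      have := hPmin W (fun v hv => hPA v (hWs v hv))
      omega
    have hshortQ : x ∈ Q.support → y ∈ Q.support → False := by
      intro hx hy
      obtain ⟨W, hWl, hWs⟩ := shortcut Q hxy hx hy hQe
      have := hQmin W (fun v hv => hQB v (hWs v hv))
      omega
    have hmixed : ∀ z w : V, G.Adj z w → z ∈ (Walk.cons h1 P').support → z ∉ Q.support →
        w ∈ Q.support → w ∉ (Walk.cons h1 P').support → False := by
      intro z w hzw hzP hzQ hwQ hwP
      have hzA : z ∈ A := by
        have := hPA z hzP
        rcases this with h | h | h
        · exact absurd (h ▸ Q.start_mem_support) hzQ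
        · exact absurd (h ▸ Q.end_mem_support) hzQ
        · exact h
      have hwB : w ∈ B := by
        have := hQB w hwQ
        rcases this with h | h | h
        · exact absurd (h ▸ (Walk.cons h1 P').start_mem_support) hwP
        · exact absurd (h ▸ (Walk.cons h1 P').end_mem_support) hwP
        · exact h
      exact hAB w (avoid_closure hzA hzw (avoid_not_mem hwB)) hwB
    rcases memPQ x hxC with hxP | hxQ <;> rcases memPQ y hyC with hyP | hyQ
    · exact hshortP hxP hyP
    · by_cases hyP' : y ∈ (Walk.cons h1 P').support
      · exact hshortP hxP hyP'
      · by_cases hxQ' : x ∈ Q.support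
        · exact hshortQ hxQ' hyQ
        · exact hmixed x y hxy hxP hxQ' hyQ hyP'
    · by_cases hxP' : x ∈ (Walk.cons h1 P').support
      · exact hshortP hxP' hyP
      · by_cases hyQ' : y ∈ Q.support
        · exact hshortQ hxQ hyQ'
        · exact hmixed y x hxy.symm hyP hyQ' hxQ hxP'
    · exact hshortQ hxQ hyQ

end Clique

lemma simplicial_transfer {U : Set V} {u : V} (hu : u ∈ U)
    (hnb : ∀ x, G.Adj u x → x ∈ U)
    (hs : Simplicial (G.induce U) ⟨u, hu⟩) : Simplicial G u := by
  intro x hx y hy hne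
  rw [Set.mem_insert_iff, SimpleGraph.mem_neighborSet] at hx hy
  have hxU : x ∈ U := by
    rcases hx with h | h
    · exact h ▸ hu
    · exact hnb x h
  have hyU : y ∈ U := by
    rcases hy with h | h
    · exact h ▸ hu
    · exact hnb y h
  have hx' : (⟨x, hxU⟩ : U) ∈ insert (⟨u, hu⟩ : U) ((G.induce U).neighborSet ⟨u, hu⟩) := by
    rcases hx with h | h
    · exact Set.mem_insert_iff.mpr (Or.inl (Subtype.ext h))
    · exact Set.mem_insert_iff.mpr (Or.inr h)
  have hy' : (⟨y, hyU⟩ : U) ∈ insert (⟨u, hu⟩ : U) ((G.induce U).neighborSet ⟨u, hu⟩) := by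
    rcases hy with h | h
    · exact Set.mem_insert_iff.mpr (Or.inl (Subtype.ext h))
    · exact Set.mem_insert_iff.mpr (Or.inr h)
  exact hs _ hx' _ hy' (fun hEq => hne (congrArg Subtype.val hEq))

universe u

lemma dirac_aux (n : ℕ) : ∀ (V : Type u) [Fintype V] (G : SimpleGraph V),
    Fintype.card V ≤ n → Nonempty V → Chordal G →
    (∃ v, Simplicial G v) ∧
      ((¬ ∀ x y : V, x ≠ y → G.Adj x y) →
        ∃ u v, u ≠ v ∧ ¬ G.Adj u v ∧ Simplicial G u ∧ Simplicial G v) := by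
  induction n with
  | zero =>
    intro V _ G hcard hne _
    haveI := hne
    have := Fintype.card_pos (α := V)
    omega
  | succ n ih =>
    intro V _ G hcard hne hG
    classical
    by_cases hcomp : ∀ x y : V, x ≠ y → G.Adj x y
    · haveI := hne
      exact ⟨⟨Classical.arbitrary V, fun x _ y _ hxy => hcomp x y hxy⟩,
        fun h => absurd hcomp h⟩
    · push_neg at hcomp
      obtain ⟨a, b, hab, hnadj⟩ := hcomp
      set Sep : Finset V → Prop := fun T => ∀ w : G.Walk a b, ∃ x ∈ w.support, x ∈ T with hSep
      set base : Finset V := (Finset.univ.erase a).erase b with hbase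
      have hbasesep : Sep base := by
        intro w
        cases w with
        | nil => exact absurd rfl hab
        | @cons _ c _ h p =>
          refine ⟨c, by rw [Walk.support_cons]; exact List.mem_cons_of_mem _ p.start_mem_support, ?_⟩
          rw [hbase, Finset.mem_erase, Finset.mem_erase]
          refine ⟨fun h' => hnadj (h' ▸ h), h.ne', Finset.mem_univ _⟩
      set candidates : Finset (Finset V) := base.powerset.filter Sep with hcand
      have hnecand : candidates.Nonempty :=
        ⟨base, by rw [hcand, Finset.mem_filter]; exact ⟨Finset.mem_powerset_self _, hbasesep⟩⟩
      obtain ⟨S, hScand, hSmin⟩ := candidates.exists_min_image Finset.card hnecand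
      rw [hcand, Finset.mem_filter, Finset.mem_powerset] at hScand
      obtain ⟨hSsub, hSsep⟩ := hScand
      have ha : a ∉ (↑S : Set V) := by
        intro h
        have := hSsub h
        rw [hbase, Finset.mem_erase, Finset.mem_erase] at this
        exact this.2.1 rfl
      have hb : b ∉ (↑S : Set V) := by
        intro h
        have := hSsub h
        rw [hbase, Finset.mem_erase, Finset.mem_erase] at this
        exact this.1 rfl
      have hsepS : ∀ w : G.Walk a b, ∃ x ∈ w.support, x ∈ (↑S : Set V) := by
        intro w
        obtain ⟨x, hx, hxS⟩ := hSsep w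
        exact ⟨x, hx, hxS⟩
      have hminS : ∀ s ∈ (↑S : Set V), ∃ w : G.Walk a b, ∀ x ∈ w.support, x ∈ (↑S : Set V) → x = s := by
        intro s hs
        have hTsep : ¬ Sep (S.erase s) := by
          intro hT
          have hTcand : S.erase s ∈ candidates := by
            rw [hcand, Finset.mem_filter, Finset.mem_powerset]
            exact ⟨(Finset.erase_subset _ _).trans hSsub, hT⟩
          have := hSmin _ hTcand
          have := Finset.card_erase_lt_of_mem hs
          omega
        simp only [hSep] at hTsep
        push_neg at hTsep
        obtain ⟨w, hw⟩ := hTsep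
        refine ⟨w, fun x hx hxS => ?_⟩
        have := hw x hx
        rw [Finset.mem_erase] at this
        push_neg at this
        by_contra hxs
        exact this hxs (Finset.mem_coe.mp hxS)
      have hclique := sep_clique hG hsepS hminS ha hb
      have hABdisj : ∀ z, z ∈ AvoidComp G ↑S a → z ∈ AvoidComp G ↑S b → False := by
        rintro z ⟨w1, h1⟩ ⟨w2, h2⟩
        obtain ⟨x, hx, hxS⟩ := hsepS (w1.append w2.reverse)
        rw [Walk.support_append, List.mem_append] at hx
        rcases hx with h | h
        · exact h1 x h hxS
        · refine h2 x ?_ hxS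
          have := List.mem_of_mem_tail h
          rwa [Walk.support_reverse, List.mem_reverse] at this
      have side : ∀ (p q : V), p ∉ (↑S : Set V) → q ∉ (↑S : Set V) →
          (∀ w : G.Walk p q, ∃ x ∈ w.support, x ∈ (↑S : Set V)) →
          ∃ u, u ∈ AvoidComp G ↑S p ∧ Simplicial G u := by
        intro p q hp hq hsepPQ
        set A := AvoidComp G ↑S p with hA
        set U : Set V := A ∪ ↑S with hU
        haveI : Fintype ↥U := (Set.toFinite U).fintype
        have hpA : p ∈ A := avoid_self hp
        have hqU : q ∉ U := by
          rintro (h | h)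
          · obtain ⟨w, hw⟩ := h
            obtain ⟨x, hx, hxS⟩ := hsepPQ w
            exact hw x hx hxS
          · exact hq h
        have hcardU : Fintype.card ↥U < Fintype.card V := by
          refine Fintype.card_lt_of_injective_of_notMem Subtype.val Subtype.val_injective (b := q) ?_
          rw [Subtype.range_val]
          exact hqU
        have hclosure : ∀ z, z ∈ A → ∀ x, G.Adj z x → x ∈ U := by
          intro z hz x hadj
          by_cases hxS : x ∈ (↑S : Set V)
          · exact Or.inr hxS
          · exact Or.inl (avoid_closure hz hadj hxS)
        obtain ⟨hex, hrest⟩ := ih ↥U (G.induce U) (by omega) ⟨⟨p, Or.inl hpA⟩⟩ (hG.induce U)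
        have key : ∃ u : ↥U, (↑u : V) ∈ A ∧ Simplicial (G.induce U) u := by
          by_cases hc : ∀ x y : ↥U, x ≠ y → (G.induce U).Adj x y
          · exact ⟨⟨p, Or.inl hpA⟩, hpA, fun x _ y _ hxy => hc x y hxy⟩
          · obtain ⟨u1, u2, hne12, hnadj12, h1s, h2s⟩ := hrest hc
            by_cases h1A : (↑u1 : V) ∈ A
            · exact ⟨u1, h1A, h1s⟩
            · by_cases h2A : (↑u2 : V) ∈ A
              · exact ⟨u2, h2A, h2s⟩
              · exfalso
                have h1S : (↑u1 : V) ∈ (↑S : Set V) := u1.2.resolve_left h1A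
                have h2S : (↑u2 : V) ∈ (↑S : Set V) := u2.2.resolve_left h2A
                exact hnadj12 (hclique _ h1S _ h2S (fun h => hne12 (Subtype.ext h)))
        obtain ⟨u, huA, husimp⟩ := key
        refine ⟨↑u, huA, simplicial_transfer u.2 (hclosure _ huA) ?_⟩
        convert husimp
      obtain ⟨u, huA, husimp⟩ := side a b ha hb hsepS
      have hsepS' : ∀ w : G.Walk b a, ∃ x ∈ w.support, x ∈ (↑S : Set V) := by
        intro w
        obtain ⟨x, hx, hxS⟩ := hsepS w.reverse
        rw [Walk.support_reverse, List.mem_reverse] at hx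
        exact ⟨x, hx, hxS⟩
      obtain ⟨v, hvB, hvsimp⟩ := side b a hb ha hsepS'
      have hneuv : u ≠ v := fun h => hABdisj u huA (h ▸ hvB)
      have hnadjuv : ¬ G.Adj u v :=
        fun h => hABdisj v (avoid_closure huA h (avoid_not_mem hvB)) hvB
      exact ⟨⟨u, husimp⟩, fun _ => ⟨u, v, hneuv, hnadjuv, husimp, hvsimp⟩⟩


end Aux

/-- Dirac's lemma: every (finite, nonempty) chordal graph has a simplicial vertex;
moreover, if it is not complete, it has two non-adjacent simplicial vertices. -/
theorem chordal_has_simplicial {V : Type*} [Fintype V] [Nonempty V]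
    (G : SimpleGraph V) (hG : Chordal G) :
    (∃ v, Simplicial G v) ∧
      ((¬ ∀ x y : V, x ≠ y → G.Adj x y) →
        ∃ u v, u ≠ v ∧ ¬ G.Adj u v ∧ Simplicial G u ∧ Simplicial G v) :=
  dirac_aux (Fintype.card V) V G le_rfl ‹Nonempty V› hG
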